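/- Let (V, σ, F) satisfy P0–P4 and AP1 with four consecutive circle vertices m2, m1, p1, p2 signed −, −, +, +, and suppose neither {m1, p1} nor its complement belongs to F. Then at least one of m1, p1 is removable (admits no dangerous set and no dangerous pair). -/
import Mathlib


/-- A set of vertices on the circle `ZMod n` is a circular interval if it consists of
consecutive vertices. -/
def IsCircularInterval {n : ℕ} (U : Set (ZMod n)) : Prop :=
  ∃ (a : ZMod n) (k : ℕ), U = {x | ∃ i : ℕ, i < k ∧ x = a + (i : ZMod n)}

set_option linter.unusedSectionVars false

namespace Stmt12

variable {n : ℕ}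

def d (x y : ZMod n) : ℕ := (y - x).val

def arc (x y : ZMod n) : Set (ZMod n) := {v | d x v ≤ d x y}

variable [NeZero n]

lemma d_lt (x y : ZMod n) : d x y < n := ZMod.val_lt _

lemma cast_d (x y : ZMod n) : ((d x y : ℕ) : ZMod n) = y - x := by
  simp [d, ZMod.natCast_val, ZMod.cast_id]

lemma eq_add_d (x y : ZMod n) : y = x + (d x y : ZMod n) := by
  rw [cast_d]; ring

lemma d_self (x : ZMod n) : d x x = 0 := by simp [d]

lemma d_eq_zero_iff {x y : ZMod n} : d x y = 0 ↔ y = x := by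
  simp [d, ZMod.val_eq_zero, sub_eq_zero]

lemma d_sub {x y z : ZMod n} (h : d x y ≤ d x z) : d y z = d x z - d x y := by
  have h1 : z - y = ((d x z - d x y : ℕ) : ZMod n) := by
    rw [Nat.cast_sub h, cast_d, cast_d]; ring
  rw [d, h1, ZMod.val_cast_of_lt (by have := d_lt x z; omega)]

lemma d_add_rev {x y : ZMod n} (h : y ≠ x) : d x y + d y x = n := by
  have h0 : y - x ≠ 0 := sub_ne_zero.mpr h
  have h2 : x - y = -(y - x) := by ring
  have hlt := ZMod.val_lt (y - x)
  rw [d, d, h2, ZMod.neg_val]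
  simp only [h0, if_false]
  omega

lemma d_total (x y t : ZMod n) : d x y ≤ d x t ∨ d y x ≤ d y t := by
  by_contra hc
  push_neg at hc
  obtain ⟨h1, h2⟩ := hc
  have hxy : y ≠ x := by rintro rfl; simp [d_self] at h2
  have htx : t ≠ x := by rintro rfl; simp [d_self] at h2
  have hty : t ≠ y := by rintro rfl; simp [d_self] at h1
  have e1 : d t y = d x y - d x t := d_sub h1.le
  have e2 : d t x = d y x - d y t := d_sub h2.le
  have e3 := d_add_rev hty
  have e4 := d_add_rev htx
  have e5 := d_add_rev hxy
  have e6 := d_add_rev hxy.symm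
  have hn0 : 0 < n := Nat.pos_of_ne_zero (NeZero.ne n)
  omega

lemma d_succ {x y : ZMod n} (h : y + 1 ≠ x) : d x (y + 1) = d x y + 1 := by
  have hlt := d_lt x y
  rcases Nat.lt_or_ge (d x y + 1) n with hl | hg
  · have h1 : (y + 1) - x = ((d x y + 1 : ℕ) : ZMod n) := by
      push_cast [cast_d]; ring
    rw [d, h1, ZMod.val_cast_of_lt hl]
  · exfalso
    apply h
    have hdn : d x y = n - 1 := by omega
    have h1 : y - x = ((n - 1 : ℕ) : ZMod n) := by rw [← hdn, cast_d]
    have h2 : ((n - 1 : ℕ) : ZMod n) = -1 := by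
      rw [Nat.cast_sub (by omega : 1 ≤ n), Nat.cast_one, ZMod.natCast_self]
      ring
    have : y - x = -1 := h1.trans h2
    linear_combination this

lemma interval_subset {S : Set (ZMod n)} (hS : IsCircularInterval S) (hSu : S ≠ Set.univ)
    {x y : ZMod n} (hx : x ∈ S) (hy : y ∈ S) : arc x y ⊆ S ∨ arc y x ⊆ S := by
  obtain ⟨a, k, rfl⟩ := hS
  have hk : k < n := by
    by_contra hk
    push_neg at hk
    apply hSu
    ext v
    simp only [Set.mem_univ, iff_true, Set.mem_setOf_eq]
    exact ⟨d a v, lt_of_lt_of_le (d_lt a v) hk, eq_add_d a v⟩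
  obtain ⟨i, hi, rfl⟩ := hx
  obtain ⟨j, hj, rfl⟩ := hy
  have key : ∀ i j : ℕ, i < k → j < k → i ≤ j →
      arc (a + (i : ZMod n)) (a + (j : ZMod n)) ⊆ {x | ∃ t : ℕ, t < k ∧ x = a + (t : ZMod n)} := by
    intro i j hi hj hij v hv
    have dai : d a (a + (i : ZMod n)) = i := by
      rw [d, add_sub_cancel_left, ZMod.val_cast_of_lt (lt_trans hi hk)]
    have daj : d a (a + (j : ZMod n)) = j := by
      rw [d, add_sub_cancel_left, ZMod.val_cast_of_lt (lt_trans hj hk)]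
    have hij' : d a (a + (i : ZMod n)) ≤ d a (a + (j : ZMod n)) := by rw [dai, daj]; exact hij
    have dij : d (a + (i : ZMod n)) (a + (j : ZMod n)) = j - i := by
      rw [d_sub hij', dai, daj]
    have hv' : d (a + (i : ZMod n)) v ≤ j - i := by rw [← dij]; exact hv
    refine ⟨i + d (a + (i : ZMod n)) v, by omega, ?_⟩
    have he := eq_add_d (a + (i : ZMod n)) v
    conv_lhs => rw [he]
    push_cast
    ring
  rcases le_total i j with h | h
  · exact Or.inl (key i j hi hj h)
  · exact Or.inr (key j i hj hi h)

lemma succ_mem_arc (hn2 : 2 ≤ n) {x z : ZMod n} (hz : z ≠ x) : x + 1 ∈ arc x z := by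
  haveI : Fact (1 < n) := ⟨by omega⟩
  have h1 : d x (x + 1) = 1 := by
    rw [d, add_sub_cancel_left, ZMod.val_one]
  have h2 : d x z ≠ 0 := fun h => hz (d_eq_zero_iff.mp h)
  simp only [arc, Set.mem_setOf_eq, h1]
  omega

lemma self_mem_arc (x z : ZMod n) : x ∈ arc x z := by
  simp [arc, d_self]

lemma end_mem_arc (x z : ZMod n) : z ∈ arc x z := by simp [arc]

end Stmt12

open Stmt12

/-- Let `(V, σ, F)` satisfy P0–P4 and AP1, with four consecutive circle
vertices `m2, m1, p1, p2` signed `−, −, +, +`, and suppose neither `{m1, p1}` nor its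
complement belongs to `F`. Then at least one of `m1`, `p1` is removable: it admits no
dangerous set and no dangerous pair. (`true` = `+`, `false` = `−`; the circle is `ZMod n`.) -/
theorem stmt_12 {n : ℕ} (hn : 4 ≤ n)
    (σ : ZMod n → Bool) (F : Set (Set (ZMod n)))
    (hF : ∀ U ∈ F, U ≠ ∅ ∧ U ≠ Set.univ)
    (hP0 : ∀ U ∈ F, IsCircularInterval U)
    (hP1 : ∀ U ∈ F, ∀ W ∈ F, (U ∩ W).Nonempty → U ∪ W ≠ Set.univ →
      U ∩ W ∈ F ∧ U ∪ W ∈ F)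
    (hP2 : ∀ U ∈ F, (∃ u ∈ U, σ u = true) ∧ (∃ v ∉ U, σ v = false))
    (hP3 : ∀ U ∈ F, ∀ W ∈ F, U ∩ W = ∅ → ∃ v ∉ U ∪ W, σ v = false)
    (hP4 : ∀ U ∈ F, ∀ W ∈ F, U ∪ W = Set.univ → ∃ u ∈ U ∩ W, σ u = true)
    (hAP1 : ∀ U ∈ F, ∀ u ∈ U, σ u = true →
      ∀ u', u' ∉ U → (u' = u + 1 ∨ u = u' + 1) → σ u' = true)
    (m2 m1 p1 p2 : ZMod n)
    (hm1 : m1 = m2 + 1) (hp1 : p1 = m2 + 2) (hp2 : p2 = m2 + 3)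
    (hσm2 : σ m2 = false) (hσm1 : σ m1 = false)
    (hσp1 : σ p1 = true) (hσp2 : σ p2 = true)
    (hpair : ({m1, p1} : Set (ZMod n)) ∉ F)
    (hpairc : (({m1, p1} : Set (ZMod n))ᶜ) ∉ F) :
    ((¬ ∃ U ∈ F, m1 ∉ U ∧ ∀ x ∉ U, σ x = false → x = m1) ∧
     (¬ ∃ U ∈ F, ∃ W ∈ F, U ∩ W = ∅ ∧ m1 ∉ U ∪ W ∧
        ∀ x ∉ U ∪ W, σ x = false → x = m1)) ∨
    ((¬ ∃ U ∈ F, p1 ∈ U ∧ ∀ x ∈ U, σ x = true → x = p1) ∧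
     (¬ ∃ U ∈ F, ∃ W ∈ F, U ∪ W = Set.univ ∧ p1 ∈ U ∩ W ∧
        ∀ x ∈ U ∩ W, σ x = true → x = p1)) := by
  haveI hNZ : NeZero n := ⟨by omega⟩
  haveI : Fact (1 < n) := ⟨by omega⟩
  subst hm1 hp1 hp2
  -- distinctness facts
  have hne_gen : ∀ i j : ℕ, i < n → j < n → i ≠ j →
      m2 + (i : ZMod n) ≠ m2 + (j : ZMod n) := by
    intro i j hi hj hij h
    have h2 : (i : ZMod n) = (j : ZMod n) := add_left_cancel h
    apply hij
    rw [← ZMod.val_cast_of_lt hi, ← ZMod.val_cast_of_lt hj, h2]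
  have hne10 : m2 + 1 ≠ m2 := by
    have h := hne_gen 1 0 (by omega) (by omega) (by omega); simpa using h
  have hne20 : m2 + 2 ≠ m2 := by
    have h := hne_gen 2 0 (by omega) (by omega) (by omega); simpa using h
  have hne30 : m2 + 3 ≠ m2 := by
    have h := hne_gen 3 0 (by omega) (by omega) (by omega); simpa using h
  have hne21 : m2 + 2 ≠ m2 + 1 := by
    have h := hne_gen 2 1 (by omega) (by omega) (by omega); simpa using h
  have hne31 : m2 + 3 ≠ m2 + 1 := by
    have h := hne_gen 3 1 (by omega) (by omega) (by omega); simpa using h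
  have hne32 : m2 + 3 ≠ m2 + 2 := by
    have h := hne_gen 3 2 (by omega) (by omega) (by omega); simpa using h
  -- AP1 helper: a set of F containing p1 contains m1
  have hap : ∀ S, S ∈ F → m2 + 2 ∈ S → m2 + 1 ∈ S := by
    intro S hS h2
    by_contra h1
    have h := hAP1 S hS (m2 + 2) h2 hσp1 (m2 + 1) h1 (Or.inr (by ring))
    rw [hσm1] at h
    exact Bool.noConfusion h
  -- a set of F containing m2 but not m1 is closed under arcs to m2
  have harc_zero : ∀ S, S ∈ F → m2 ∈ S → m2 + 1 ∉ S → ∀ z ∈ S, arc z m2 ⊆ S := by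
    intro S hS h0 h1 z hz
    by_cases hz0 : z = m2
    · rw [hz0]
      intro v hv
      have hd : d m2 v = 0 := Nat.le_zero.mp (by simpa [arc, d_self] using hv)
      rwa [d_eq_zero_iff.mp hd]
    · rcases interval_subset (hP0 S hS) (hF S hS).2 hz h0 with h | h
      · exact h
      · exact absurd (h (succ_mem_arc (by omega) hz0)) h1
  -- a set of F containing p1 but not p2 is closed under arcs to p1
  have harc_two : ∀ S, S ∈ F → m2 + 2 ∈ S → m2 + 3 ∉ S → ∀ w ∈ S, arc w (m2 + 2) ⊆ S := by
    intro S hS h2 h3 w hw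
    by_cases hw2 : w = m2 + 2
    · rw [hw2]
      intro v hv
      have hd : d (m2 + 2) v = 0 := Nat.le_zero.mp (by simpa [arc, d_self] using hv)
      rwa [d_eq_zero_iff.mp hd]
    · rcases interval_subset (hP0 S hS) (hF S hS).2 hw h2 with h | h
      · exact h
      · exfalso
        apply h3
        have hm := succ_mem_arc (n := n) (by omega) (x := m2 + 2) (z := w) hw2
        have h32 : m2 + 3 = (m2 + 2) + 1 := by ring
        rw [h32]
        exact h hm
  -- a set of F containing m2 and p2 but neither m1 nor p1 is the complement of {m1,p1}
  have hcomp12 : ∀ S, S ∈ F → m2 ∈ S → m2 + 3 ∈ S → m2 + 1 ∉ S → m2 + 2 ∉ S → False := by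
    intro S hS h0 h3 h1 h2
    have harc : arc (m2 + 3) m2 ⊆ S := by
      rcases interval_subset (hP0 S hS) (hF S hS).2 h3 h0 with h | h
      · exact h
      · exact absurd (h (succ_mem_arc (by omega) hne30)) h1
    apply hpairc
    have hSeq : S = ({m2 + 1, m2 + 2} : Set (ZMod n))ᶜ := by
      apply Set.Subset.antisymm
      · intro x hx
        simp only [Set.mem_compl_iff, Set.mem_insert_iff, Set.mem_singleton_iff]
        push_neg
        constructor
        · rintro rfl; exact h1 hx
        · rintro rfl; exact h2 hx
      · intro x hx
        simp only [Set.mem_compl_iff, Set.mem_insert_iff, Set.mem_singleton_iff] at hx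
        push_neg at hx
        apply harc
        have hd0 : d (m2 + 3) m2 = n - 3 := by
          have he : m2 - (m2 + 3) = ((n - 3 : ℕ) : ZMod n) := by
            rw [Nat.cast_sub (by omega : 3 ≤ n), ZMod.natCast_self]
            push_cast
            ring
          rw [d, he, ZMod.val_cast_of_lt (by omega)]
        have hdlt := d_lt (m2 + 3) x
        have hne2 : d (m2 + 3) x ≠ n - 2 := by
          intro hdx
          apply hx.1
          have he := eq_add_d (m2 + 3) x
          rw [hdx] at he
          rw [he, Nat.cast_sub (by omega : 2 ≤ n), ZMod.natCast_self]
          push_cast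
          ring
        have hne1 : d (m2 + 3) x ≠ n - 1 := by
          intro hdx
          apply hx.2
          have he := eq_add_d (m2 + 3) x
          rw [hdx] at he
          rw [he, Nat.cast_sub (by omega : 1 ≤ n), ZMod.natCast_self]
          push_cast
          ring
        show d (m2 + 3) x ≤ d (m2 + 3) m2
        rw [hd0]
        omega
    rw [← hSeq]
    exact hS
  -- a set of F containing m1 and p1 but not p2 contains m2
  have h_ex_zero : ∀ S, S ∈ F → m2 + 1 ∈ S → m2 + 2 ∈ S → m2 + 3 ∉ S → m2 ∈ S := by
    intro S hS h1 h2 h3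
    have hex : ∃ x, x ∈ S ∧ x ≠ m2 + 1 ∧ x ≠ m2 + 2 := by
      by_contra hx
      push_neg at hx
      apply hpair
      have hSeq : S = ({m2 + 1, m2 + 2} : Set (ZMod n)) := by
        apply Set.Subset.antisymm
        · intro x hxS
          simp only [Set.mem_insert_iff, Set.mem_singleton_iff]
          by_cases hxa : x = m2 + 1
          · exact Or.inl hxa
          · exact Or.inr (hx x hxS hxa)
        · intro x hxmem
          simp only [Set.mem_insert_iff, Set.mem_singleton_iff] at hxmem
          rcases hxmem with rfl | rfl
          · exact h1
          · exact h2
      rw [← hSeq]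
      exact hS
    obtain ⟨x, hxS, hx1, hx2⟩ := hex
    apply harc_two S hS h2 h3 x hxS
    have e1 : d x (m2 + 1) = d x m2 + 1 := d_succ (Ne.symm hx1)
    have e2 : d x (m2 + 2) = d x (m2 + 1) + 1 := by
      have h' : (m2 + 1) + 1 ≠ x := by
        rw [show (m2 + 1) + 1 = m2 + 2 by ring]
        exact Ne.symm hx2
      have h'' := d_succ h'
      rwa [show (m2 + 1) + 1 = m2 + 2 by ring] at h''
    show d x m2 ≤ d x (m2 + 2)
    omega
  by_contra hcon
  rw [not_or] at hcon
  obtain ⟨hmside, hpside⟩ := hcon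
  rw [not_and_or, not_not, not_not] at hmside hpside
  -- normalize the p1 side
  have hPD : ∃ U ∈ F, ∃ W : Set (ZMod n), (W = Set.univ ∨ W ∈ F) ∧ U ∪ W = Set.univ ∧
      m2 ∈ U ∧ m2 + 1 ∈ U ∧ m2 + 2 ∈ U ∧ m2 + 3 ∉ U ∧ m2 + 1 ∈ W ∧ m2 + 3 ∈ W ∧
      (∀ x, x ∈ U ∩ W → σ x = true → x = m2 + 2) := by
    have build : ∀ U W : Set (ZMod n), U ∈ F → W ∈ F → U ∪ W = Set.univ →
        m2 + 2 ∈ U → m2 + 2 ∈ W → (∀ x, x ∈ U ∩ W → σ x = true → x = m2 + 2) →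
        m2 + 3 ∉ U →
        ∃ U ∈ F, ∃ W : Set (ZMod n), (W = Set.univ ∨ W ∈ F) ∧ U ∪ W = Set.univ ∧
          m2 ∈ U ∧ m2 + 1 ∈ U ∧ m2 + 2 ∈ U ∧ m2 + 3 ∉ U ∧ m2 + 1 ∈ W ∧ m2 + 3 ∈ W ∧
          (∀ x, x ∈ U ∩ W → σ x = true → x = m2 + 2) := by
      intro U W hU hW huniv h2U h2W hpos h3U
      have h1U := hap U hU h2U
      have h1W := hap W hW h2W
      have h3W : m2 + 3 ∈ W := by
        have hm : m2 + 3 ∈ U ∪ W := huniv ▸ Set.mem_univ _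
        rcases hm with h | h
        · exact absurd h h3U
        · exact h
      have h0U := h_ex_zero U hU h1U h2U h3U
      exact ⟨U, hU, W, Or.inr hW, huniv, h0U, h1U, h2U, h3U, h1W, h3W, hpos⟩
    rcases hpside with ⟨U, hU, h2U, hposU⟩ | ⟨U, hU, W, hW, huniv, h2UW, hpos⟩
    · have h1U := hap U hU h2U
      have h3U : m2 + 3 ∉ U := fun h => hne32 (hposU _ h hσp2)
      have h0U := h_ex_zero U hU h1U h2U h3U
      exact ⟨U, hU, Set.univ, Or.inl rfl, by simp, h0U, h1U, h2U, h3U, Set.mem_univ _,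
        Set.mem_univ _, fun x hx hp => hposU x hx.1 hp⟩
    · have h3or : m2 + 3 ∉ U ∨ m2 + 3 ∉ W := by
        by_contra hb
        push_neg at hb
        exact hne32 (hpos _ ⟨hb.1, hb.2⟩ hσp2)
      rcases h3or with h3 | h3
      · exact build U W hU hW huniv h2UW.1 h2UW.2 hpos h3
      · exact build W U hW hU (by rwa [Set.union_comm]) h2UW.2 h2UW.1
          (fun x hx hp => hpos x (by rwa [Set.inter_comm] at hx) hp) h3
  -- normalize the m1 side
  have hMD : (∃ A0 ∈ F, m2 ∈ A0 ∧ m2 + 1 ∉ A0 ∧ m2 + 2 ∉ A0 ∧ m2 + 3 ∉ A0 ∧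
      (∀ x, σ x = false → x ≠ m2 + 1 → x ∈ A0)) ∨
     (∃ A0 ∈ F, ∃ B0 ∈ F, A0 ∩ B0 = ∅ ∧ m2 ∈ A0 ∧ m2 + 1 ∉ A0 ∧ m2 + 2 ∉ A0 ∧
      m2 + 3 ∉ A0 ∧ m2 + 1 ∉ B0 ∧ m2 + 2 ∉ B0 ∧
      (∀ x, σ x = false → x ≠ m2 + 1 → x ∈ A0 ∪ B0)) := by
    rcases hmside with ⟨A, hA, h1A, hnegA⟩ | ⟨A, hA, B, hB, hdisj, h1AB, hnegAB⟩
    · left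
      have hneg : ∀ x, σ x = false → x ≠ m2 + 1 → x ∈ A := by
        intro x hx hxne
        by_contra hxA
        exact hxne (hnegA x hxA hx)
      have h0 : m2 ∈ A := hneg m2 hσm2 (Ne.symm hne10)
      have h2A : m2 + 2 ∉ A := fun h => h1A (hap A hA h)
      have h3A : m2 + 3 ∉ A := fun h => hcomp12 A hA h0 h h1A h2A
      exact ⟨A, hA, h0, h1A, h2A, h3A, hneg⟩
    · right
      have h1A : m2 + 1 ∉ A := fun h => h1AB (Set.mem_union_left _ h)
      have h1B : m2 + 1 ∉ B := fun h => h1AB (Set.mem_union_right _ h)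
      have h2A : m2 + 2 ∉ A := fun h => h1A (hap A hA h)
      have h2B : m2 + 2 ∉ B := fun h => h1B (hap B hB h)
      have hneg : ∀ x, σ x = false → x ≠ m2 + 1 → x ∈ A ∪ B := by
        intro x hx hxne
        by_contra hxA
        exact hxne (hnegAB x hxA hx)
      have h0 : m2 ∈ A ∪ B := hneg m2 hσm2 (Ne.symm hne10)
      rcases h0 with h0 | h0
      · have h3A : m2 + 3 ∉ A := fun h => hcomp12 A hA h0 h h1A h2A
        exact ⟨A, hA, B, hB, hdisj, h0, h1A, h2A, h3A, h1B, h2B, hneg⟩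
      · have h3B : m2 + 3 ∉ B := fun h => hcomp12 B hB h0 h h1B h2B
        refine ⟨B, hB, A, hA, by rw [Set.inter_comm]; exact hdisj, h0, h1B, h2B, h3B,
          h1A, h2A, ?_⟩
        intro x hx hxne
        rcases hneg x hx hxne with h | h
        · exact Set.mem_union_right _ h
        · exact Set.mem_union_left _ h
  -- endgame
  obtain ⟨U, hU, W, hWor, huniv, h0U, h1U, h2U, h3U, h1W, h3W, hpos⟩ := hPD
  rcases hMD with ⟨A0, hA0, h0A, h1A, h2A, h3A, hneg⟩ |
    ⟨A0, hA0, B0, hB0, hdisj, h0A, h1A, h2A, h3A, h1B, h2B, hneg⟩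
  · -- m1-side: single set
    have hXne : (U ∩ A0).Nonempty := ⟨m2, h0U, h0A⟩
    have hXuniv : U ∪ A0 ≠ Set.univ := by
      intro h
      have hm : m2 + 3 ∈ U ∪ A0 := h ▸ Set.mem_univ _
      rcases hm with h' | h'
      · exact h3U h'
      · exact h3A h'
    have hX : U ∪ A0 ∈ F := (hP1 U hU A0 hA0 hXne hXuniv).2
    obtain ⟨v, hvn, hvneg⟩ := (hP2 _ hX).2
    by_cases hv1 : v = m2 + 1
    · subst hv1
      exact hvn (Set.mem_union_left _ h1U)
    · exact hvn (Set.mem_union_right _ (hneg v hvneg hv1))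
  · -- m1-side: pair
    have hdisj' : ∀ x, x ∈ A0 → x ∈ B0 → False := by
      intro x ha hb
      have hx : x ∈ A0 ∩ B0 := ⟨ha, hb⟩
      rw [hdisj] at hx
      exact hx
    have hXne : (U ∩ A0).Nonempty := ⟨m2, h0U, h0A⟩
    have hXuniv : U ∪ A0 ≠ Set.univ := by
      intro h
      have hm : m2 + 3 ∈ U ∪ A0 := h ▸ Set.mem_univ _
      rcases hm with h' | h'
      · exact h3U h'
      · exact h3A h'
    have hX : U ∪ A0 ∈ F := (hP1 U hU A0 hA0 hXne hXuniv).2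
    by_cases hXB : (U ∪ A0) ∩ B0 = ∅
    · obtain ⟨v, hvn, hvneg⟩ := hP3 _ hX B0 hB0 hXB
      by_cases hv1 : v = m2 + 1
      · subst hv1
        exact hvn (Set.mem_union_left _ (Set.mem_union_left _ h1U))
      · rcases hneg v hvneg hv1 with h | h
        · exact hvn (Set.mem_union_left _ (Set.mem_union_right _ h))
        · exact hvn (Set.mem_union_right _ h)
    · obtain ⟨w, hwX, hwB⟩ := Set.nonempty_iff_ne_empty.mpr hXB
      have hwA : w ∉ A0 := fun h => hdisj' w h hwB
      have hwU : w ∈ U := by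
        rcases hwX with h | h
        · exact h
        · exact absurd h hwA
      have hw1 : w ≠ m2 + 1 := fun h => h1B (h ▸ hwB)
      have hw2 : w ≠ m2 + 2 := fun h => h2B (h ▸ hwB)
      by_cases hXBu : (U ∪ A0) ∪ B0 = Set.univ
      · have h3B : m2 + 3 ∈ B0 := by
          have hm : m2 + 3 ∈ (U ∪ A0) ∪ B0 := hXBu ▸ Set.mem_univ _
          rcases hm with (h | h) | h
          · exact absurd h h3U
          · exact absurd h h3A
          · exact h
        have hA0U : A0 ⊆ U := by
          intro z hz
          by_cases hz0 : z = m2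
          · subst hz0
            exact h0U
          · have harcz : arc z m2 ⊆ A0 := harc_zero A0 hA0 h0A h1A z hz
            have hdw : d w z ≤ d w m2 := by
              rcases d_total z w m2 with h | h
              · exact absurd (harcz h) hwA
              · exact h
            have e1 : d w (m2 + 1) = d w m2 + 1 := d_succ (Ne.symm hw1)
            have e2 : d w (m2 + 2) = d w (m2 + 1) + 1 := by
              have h' : (m2 + 1) + 1 ≠ w := by
                rw [show (m2 + 1) + 1 = m2 + 2 by ring]
                exact Ne.symm hw2
              have h'' := d_succ h'
              rwa [show (m2 + 1) + 1 = m2 + 2 by ring] at h''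
            have hz2 : z ∈ arc w (m2 + 2) := by
              show d w z ≤ d w (m2 + 2)
              omega
            exact harc_two U hU h2U h3U w hwU hz2
        by_cases hWB : W ∪ B0 = Set.univ
        · obtain ⟨q, hqA, hqpos⟩ := (hP2 A0 hA0).1
          have hqU : q ∈ U := hA0U hqA
          have hqB : q ∉ B0 := fun h => hdisj' q hqA h
          have hqW : q ∈ W := by
            have hm : q ∈ W ∪ B0 := hWB ▸ Set.mem_univ _
            rcases hm with h | h
            · exact h
            · exact absurd h hqB
          have hq2 := hpos q ⟨hqU, hqW⟩ hqpos
          rw [hq2] at hqA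
          exact h2A hqA
        · have hWF : W ∈ F := by
            rcases hWor with h | h
            · exfalso
              apply hWB
              rw [h]
              simp
            · exact h
          have hY : W ∪ B0 ∈ F := (hP1 W hWF B0 hB0 ⟨m2 + 3, h3W, h3B⟩ hWB).2
          by_cases hYA : (W ∪ B0) ∪ A0 = Set.univ
          · obtain ⟨z, hzm, hzpos⟩ := hP4 _ hY A0 hA0 hYA
            obtain ⟨hzY, hzA⟩ := hzm
            have hzB : z ∉ B0 := fun h => hdisj' z hzA h
            have hzW : z ∈ W := by
              rcases hzY with h | h
              · exact h
              · exact absurd h hzB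
            have hz2 := hpos z ⟨hA0U hzA, hzW⟩ hzpos
            rw [hz2] at hzA
            exact h2A hzA
          · by_cases hYAe : (W ∪ B0) ∩ A0 = ∅
            · obtain ⟨v, hvn, hvneg⟩ := hP3 _ hY A0 hA0 hYAe
              by_cases hv1 : v = m2 + 1
              · subst hv1
                exact hvn (Set.mem_union_left _ (Set.mem_union_left _ h1W))
              · rcases hneg v hvneg hv1 with h | h
                · exact hvn (Set.mem_union_right _ h)
                · exact hvn (Set.mem_union_left _ (Set.mem_union_right _ h))
            · have hZ : (W ∪ B0) ∪ A0 ∈ F :=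
                (hP1 _ hY A0 hA0 (Set.nonempty_iff_ne_empty.mpr hYAe) hYA).2
              obtain ⟨v, hvn, hvneg⟩ := (hP2 _ hZ).2
              by_cases hv1 : v = m2 + 1
              · subst hv1
                exact hvn (Set.mem_union_left _ (Set.mem_union_left _ h1W))
              · rcases hneg v hvneg hv1 with h | h
                · exact hvn (Set.mem_union_right _ h)
                · exact hvn (Set.mem_union_left _ (Set.mem_union_right _ h))
      · have hZ : (U ∪ A0) ∪ B0 ∈ F := (hP1 _ hX B0 hB0 ⟨w, hwX, hwB⟩ hXBu).2
        obtain ⟨v, hvn, hvneg⟩ := (hP2 _ hZ).2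
        by_cases hv1 : v = m2 + 1
        · subst hv1
          exact hvn (Set.mem_union_left _ (Set.mem_union_left _ h1U))
        · rcases hneg v hvneg hv1 with h | h
          · exact hvn (Set.mem_union_left _ (Set.mem_union_right _ h))
          · exact hvn (Set.mem_union_right _ h)
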